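/- Let λ₁,…,λₙ be real numbers with λᵢ ≥ ε·H for all i, where H = Σᵢ λᵢ > 0 and ε ∈ (0, 1/n]. Setting |A|² = Σᵢ λᵢ² and tr(A³) = Σᵢ λᵢ³, one has H·tr(A³) − |A|⁴ ≥ n·ε²·H²·(|A|² − H²/n). -/

import Mathlib

/-- Pinching inequality (Lemma 3(i)): if `lam i ≥ ε·H` for all `i`, with
`H = ∑ lam i > 0` and `ε ∈ (0, 1/n]`, then
`H·tr(A³) − |A|⁴ ≥ n·ε²·H²·(|A|² − H²/n)`. -/
theorem stmt2 (n : ℕ) (ε : ℝ) (lam : Fin n → ℝ)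
    (hε : 0 < ε) (hεn : ε ≤ 1 / n)
    (hH : 0 < ∑ i, lam i)
    (hpinch : ∀ i, ε * (∑ j, lam j) ≤ lam i) :
    n * ε ^ 2 * (∑ i, lam i) ^ 2 * ((∑ i, (lam i) ^ 2) - (∑ i, lam i) ^ 2 / n)
      ≤ (∑ i, lam i) * (∑ i, (lam i) ^ 3) - (∑ i, (lam i) ^ 2) ^ 2 := by
  rcases Nat.eq_zero_or_pos n with hn | hn
  · subst hn; simp at hH
  have hn0 : (n:ℝ) ≠ 0 := Nat.cast_ne_zero.mpr hn.ne'
  set H := ∑ i, lam i with hHdef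
  set S := ∑ i, (lam i)^2 with hSdef
  set T := ∑ i, (lam i)^3 with hTdef
  have hlam : ∀ i, (0:ℝ) ≤ lam i := fun i => le_trans (by positivity) (hpinch i)
  -- identity 1
  have e1 : ∑ i, ∑ j, lam i ^ 3 * lam j = T * H := by
    rw [← Finset.sum_mul_sum]
  have e2 : ∑ i, ∑ j, lam i ^ 2 * lam j ^ 2 = S * S := by
    rw [← Finset.sum_mul_sum]
  have e3 : ∑ i, ∑ j, lam i * lam j ^ 3 = H * T := by
    rw [← Finset.sum_mul_sum]
  have e4 : ∑ i : Fin n, ∑ _j : Fin n, lam i ^ 2 * (1:ℝ) = (n:ℝ) * S := by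
    simp [Finset.sum_const]; rw [← Finset.mul_sum]
  have e5 : ∑ i, ∑ j, lam i * lam j = H * H := by
    rw [← Finset.sum_mul_sum]
  have e6 : ∑ _i : Fin n, ∑ j : Fin n, (1:ℝ) * lam j ^ 2 = (n:ℝ) * S := by
    simp [Finset.sum_const]; exact Or.inl hSdef.symm
  have h1 : ∑ i, ∑ j, lam i * lam j * (lam i - lam j)^2
      = 2 * (H * T - S^2) := by
    have expand : ∀ i j : Fin n, lam i * lam j * (lam i - lam j)^2
        = lam i ^ 3 * lam j - 2 * (lam i ^ 2 * lam j ^ 2) + lam i * lam j ^ 3 := by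
      intros; ring
    calc ∑ i, ∑ j, lam i * lam j * (lam i - lam j)^2
        = ∑ i, ∑ j, (lam i ^ 3 * lam j - 2 * (lam i ^ 2 * lam j ^ 2) + lam i * lam j ^ 3) := by
          simp only [expand]
      _ = (∑ i, ∑ j, lam i ^ 3 * lam j) - 2 * (∑ i, ∑ j, lam i ^ 2 * lam j ^ 2)
            + ∑ i, ∑ j, lam i * lam j ^ 3 := by
          simp [Finset.sum_add_distrib, Finset.sum_sub_distrib, Finset.mul_sum]
      _ = 2 * (H * T - S^2) := by rw [e1, e2, e3]; ring
  have h2 : ∑ i, ∑ j, (lam i - lam j)^2 = 2 * ((n:ℝ) * S - H^2) := by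
    have expand : ∀ i j : Fin n, (lam i - lam j)^2
        = lam i ^ 2 * (1:ℝ) - 2 * (lam i * lam j) + (1:ℝ) * lam j ^ 2 := by
      intros; ring
    calc ∑ i, ∑ j, (lam i - lam j)^2
        = ∑ i, ∑ j, (lam i ^ 2 * (1:ℝ) - 2 * (lam i * lam j) + (1:ℝ) * lam j ^ 2) := by
          simp only [expand]
      _ = (∑ i : Fin n, ∑ _j : Fin n, lam i ^ 2 * (1:ℝ)) - 2 * (∑ i, ∑ j, lam i * lam j)
            + ∑ _i : Fin n, ∑ j : Fin n, (1:ℝ) * lam j ^ 2 := by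
          simp [Finset.sum_add_distrib, Finset.sum_sub_distrib, Finset.mul_sum]
      _ = 2 * ((n:ℝ) * S - H^2) := by rw [e4, e5, e6]; ring
  have key : ∑ i, ∑ j, ε^2 * H^2 * (lam i - lam j)^2
      ≤ ∑ i, ∑ j, lam i * lam j * (lam i - lam j)^2 := by
    refine Finset.sum_le_sum fun i _ => Finset.sum_le_sum fun j _ => ?_
    refine mul_le_mul_of_nonneg_right ?_ (sq_nonneg _)
    have h0 : (0:ℝ) ≤ ε * H := by positivity
    calc ε^2 * H^2 = (ε * H) * (ε * H) := by ring
      _ ≤ lam i * lam j := mul_le_mul (hpinch i) (hpinch j) h0 (hlam i)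
  have key' : ε^2 * H^2 * (2 * ((n:ℝ) * S - H^2)) ≤ 2 * (H * T - S^2) := by
    rw [← h1, ← h2, Finset.mul_sum]
    simp only [Finset.mul_sum]
    exact key
  have eq : (n:ℝ) * ε^2 * H^2 * (S - H^2 / n) = ε^2 * H^2 * ((n:ℝ) * S - H^2) := by
    field_simp
  linarith
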